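/- Let F be a non-archimedean local field of residue characteristic p ≥ 3 and let G = Sp₄(F) acting on 𝔤 = 𝔰𝔭₄(F) by conjugation. Let n_d be the regular nilpotent element with entries (2,1)=1, (3,2)=d, (4,3)=−1 (d ∈ F^×), and let e_{a,b,c} be the nilpotent element with bottom-left 2×2 block [[b,a],[c,b]] and all other entries 0. If the binary quadratic form (X,Y) ↦ ⟨X, e_{a,b,c} Y⟩ on span(v₁,v₂) represents d, then e_{a,b,c} lies in the p-adic (analytic) closure of the conjugacy orbit Ad(G(F))·n_d. -/

import Mathlib

open Matrix

set_option maxHeartbeats 3200000 in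
theorem stmt5_key {F : Type*} [Field F] (a b c d x0 y0 t : F)
    (hd : d ≠ 0) (ht : t ≠ 0) (h2 : (2:F) ≠ 0)
    (hQ : c * x0 * x0 + 2 * b * x0 * y0 + a * y0 * y0 = d) :
    ∃ g : Matrix (Fin 4) (Fin 4) F, IsUnit g.det ∧
      gᵀ * !![0, 0, 0, 1; 0, 0, 1, 0; 0, -1, 0, 0; -1, 0, 0, 0] * g = !![0, 0, 0, 1; 0, 0, 1, 0; 0, -1, 0, 0; -1, 0, 0, 0] ∧
      (!![0, 0, 0, 0; 0, 0, 0, 0; b, a, 0, 0; c, b, 0, 0] : Matrix (Fin 4) (Fin 4) F) + t • !![-(x0*y0/d), x0*x0/d, 0, 0; -(y0*y0/d), x0*y0/d, 0, 0; 0, 0, -(x0*y0/d), -(x0*x0/d); 0, 0, y0*y0/d, x0*y0/d] = g * !![0, 0, 0, 0; 1, 0, 0, 0; 0, d, 0, 0; 0, 0, -1, 0] * g⁻¹ := by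
  have h4 : (4:F) ≠ 0 := by
    intro h; apply h2
    have h' : (2:F)*2 = 4 := by norm_num
    rcases mul_eq_zero.mp (h'.trans h) with h'' | h'' <;> exact h''
  have hs : (2*t^2*d) ≠ 0 :=
    mul_ne_zero (mul_ne_zero h2 (pow_ne_zero _ ht)) hd
  set G0 : Matrix (Fin 4) (Fin 4) F :=
    !![2*t*d*(-(b*x0 + a*y0)), 2*t^2*d*x0, 0, 0;
       2*t*d*(c*x0 + b*y0), 2*t^2*d*y0, 0, 0;
       -(d*(a*c - b*b)*(-(b*x0 + a*y0))), t*d*(a*c - b*b)*x0, -(2*t^2*(-(b*x0 + a*y0))), 2*t^3*x0;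
       d*(a*c - b*b)*(c*x0 + b*y0), -(t*d*(a*c - b*b)*y0), 2*t^2*(c*x0 + b*y0), -(2*t^3*y0)] with hG0
  set H0 : Matrix (Fin 4) (Fin 4) F :=
    !![-(2*t^3*y0), 2*t^3*x0, 0, 0;
       2*t^2*(c*x0 + b*y0), -(2*t^2*(-(b*x0 + a*y0))), 0, 0;
       t*d*(a*c - b*b)*y0, -(t*d*(a*c - b*b)*x0), 2*t^2*d*y0, 2*t^2*d*x0;
       -(d*(a*c - b*b)*(c*x0 + b*y0)), d*(a*c - b*b)*(-(b*x0 + a*y0)), 2*t*d*(c*x0 + b*y0), 2*t*d*(-(b*x0 + a*y0))] with hH0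
  have k1 : G0 * H0 = ((2*t^2*d)^2) • (1 : Matrix (Fin 4) (Fin 4) F) := by
    subst hQ
    ext i j
    fin_cases i <;> fin_cases j <;>
      simp [hG0, hH0, Matrix.mul_apply, Fin.sum_univ_four, Matrix.smul_apply, Matrix.one_apply, Matrix.add_apply, smul_eq_mul, Matrix.vecHead, Matrix.vecTail, Function.comp] <;> ring
  have k2 : G0ᵀ * !![0, 0, 0, 1; 0, 0, 1, 0; 0, -1, 0, 0; -1, 0, 0, 0] * G0 = ((2*t^2*d)^2) • (!![0, 0, 0, 1; 0, 0, 1, 0; 0, -1, 0, 0; -1, 0, 0, 0] : Matrix (Fin 4) (Fin 4) F) := by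
    subst hQ
    ext i j
    fin_cases i <;> fin_cases j <;>
      simp [hG0, Matrix.mul_apply, Fin.sum_univ_four, Matrix.smul_apply, Matrix.one_apply, Matrix.add_apply, smul_eq_mul, Matrix.vecHead, Matrix.vecTail, Function.comp] <;> ring
  have k3 : G0 * !![0, 0, 0, 0; 1, 0, 0, 0; 0, d, 0, 0; 0, 0, -1, 0] * H0
      = ((2*t^2*d)^2) • (!![0, 0, 0, 0; 0, 0, 0, 0; b, a, 0, 0; c, b, 0, 0] : Matrix (Fin 4) (Fin 4) F)
        + (4*t^5*d) • (!![-(x0*y0), x0*x0, 0, 0; -(y0*y0), x0*y0, 0, 0; 0, 0, -(x0*y0), -(x0*x0); 0, 0, y0*y0, x0*y0] : Matrix (Fin 4) (Fin 4) F) := by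
    subst hQ
    ext i j
    fin_cases i <;> fin_cases j <;>
      simp [hG0, hH0, Matrix.mul_apply, Fin.sum_univ_four, Matrix.smul_apply, Matrix.one_apply, Matrix.add_apply, smul_eq_mul, Matrix.vecHead, Matrix.vecTail, Function.comp] <;> ring
  have k4 : ((2*t^2*d)^2) • ((!![0, 0, 0, 0; 0, 0, 0, 0; b, a, 0, 0; c, b, 0, 0] : Matrix (Fin 4) (Fin 4) F) + t • !![-(x0*y0/d), x0*x0/d, 0, 0; -(y0*y0/d), x0*y0/d, 0, 0; 0, 0, -(x0*y0/d), -(x0*x0/d); 0, 0, y0*y0/d, x0*y0/d])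
      = ((2*t^2*d)^2) • (!![0, 0, 0, 0; 0, 0, 0, 0; b, a, 0, 0; c, b, 0, 0] : Matrix (Fin 4) (Fin 4) F)
        + (4*t^5*d) • (!![-(x0*y0), x0*x0, 0, 0; -(y0*y0), x0*y0, 0, 0; 0, 0, -(x0*y0), -(x0*x0); 0, 0, y0*y0, x0*y0] : Matrix (Fin 4) (Fin 4) F) := by
    ext i j
    fin_cases i <;> fin_cases j <;>
      simp [Matrix.mul_apply, Fin.sum_univ_four, Matrix.smul_apply, Matrix.one_apply, Matrix.add_apply, smul_eq_mul, Matrix.vecHead, Matrix.vecTail, Function.comp] <;> field_simp <;> ring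
  set s : F := (2*t^2*d)⁻¹ with hsdef
  have hsc : (s * s) * ((2*t^2*d)^2) = 1 := by
    rw [hsdef, ← mul_inv, ← sq]
    exact inv_mul_cancel₀ (pow_ne_zero 2 hs)
  have hGH : (s • G0) * (s • H0) = 1 := by
    rw [smul_mul_smul_comm, k1, smul_smul, hsc, one_smul]
  refine ⟨s • G0, Matrix.isUnit_det_of_right_inverse hGH, ?_, ?_⟩
  · rw [transpose_smul, smul_mul_assoc, mul_smul_comm, smul_mul_assoc, smul_smul, k2,
      smul_smul, hsc, one_smul]
  · rw [Matrix.inv_eq_right_inv hGH]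
    calc (!![0, 0, 0, 0; 0, 0, 0, 0; b, a, 0, 0; c, b, 0, 0] : Matrix (Fin 4) (Fin 4) F) + t • !![-(x0*y0/d), x0*x0/d, 0, 0; -(y0*y0/d), x0*y0/d, 0, 0; 0, 0, -(x0*y0/d), -(x0*x0/d); 0, 0, y0*y0/d, x0*y0/d]
        = ((s * s) * ((2*t^2*d)^2)) • ((!![0, 0, 0, 0; 0, 0, 0, 0; b, a, 0, 0; c, b, 0, 0] : Matrix (Fin 4) (Fin 4) F) + t • !![-(x0*y0/d), x0*x0/d, 0, 0; -(y0*y0/d), x0*y0/d, 0, 0; 0, 0, -(x0*y0/d), -(x0*x0/d); 0, 0, y0*y0/d, x0*y0/d]) := by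
          rw [hsc, one_smul]
      _ = (s * s) • (((2*t^2*d)^2) • ((!![0, 0, 0, 0; 0, 0, 0, 0; b, a, 0, 0; c, b, 0, 0] : Matrix (Fin 4) (Fin 4) F) + t • !![-(x0*y0/d), x0*x0/d, 0, 0; -(y0*y0/d), x0*y0/d, 0, 0; 0, 0, -(x0*y0/d), -(x0*x0/d); 0, 0, y0*y0/d, x0*y0/d])) := by
          rw [smul_smul]
      _ = (s * s) • (((2*t^2*d)^2) • (!![0, 0, 0, 0; 0, 0, 0, 0; b, a, 0, 0; c, b, 0, 0] : Matrix (Fin 4) (Fin 4) F)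
            + (4*t^5*d) • (!![-(x0*y0), x0*x0, 0, 0; -(y0*y0), x0*y0, 0, 0; 0, 0, -(x0*y0), -(x0*x0); 0, 0, y0*y0, x0*y0] : Matrix (Fin 4) (Fin 4) F)) := by rw [k4]
      _ = (s * s) • (G0 * !![0, 0, 0, 0; 1, 0, 0, 0; 0, d, 0, 0; 0, 0, -1, 0] * H0) := by rw [k3]
      _ = (s • G0) * !![0, 0, 0, 0; 1, 0, 0, 0; 0, d, 0, 0; 0, 0, -1, 0] * (s • H0) := by
          rw [smul_mul_assoc, mul_smul_comm, smul_mul_assoc, smul_smul]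

/-- The Gram matrix of the symplectic form
`⟨x,y⟩ = x₁y₄ + x₂y₃ − x₃y₂ − x₄y₁` on `F⁴`. -/
def sympJ (F : Type*) [Field F] : Matrix (Fin 4) (Fin 4) F :=
  !![0, 0, 0, 1; 0, 0, 1, 0; 0, -1, 0, 0; -1, 0, 0, 0]

/-- The symplectic form `⟨x,y⟩ = x₁y₄ + x₂y₃ − x₃y₂ − x₄y₁`. -/
def sympForm {F : Type*} [Field F] (x y : Fin 4 → F) : F :=
  x 0 * y 3 + x 1 * y 2 - x 2 * y 1 - x 3 * y 0

/-- Let `F` be a non-archimedean local field of odd residue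
characteristic.  Let `n_d` be the regular nilpotent element of `𝔰𝔭₄(F)` with entries
`(2,1) = 1`, `(3,2) = d`, `(4,3) = −1` (`d ∈ Fˣ`), and `e_{a,b,c}` the nilpotent element
with bottom-left `2 × 2` block `!![b, a; c, b]`.  If the binary quadratic form
`(X, Y) ↦ ⟨X, e_{a,b,c} Y⟩` on `span(v₁, v₂)` represents `d`, then `e_{a,b,c}` lies in the
`p`-adic (analytic) closure of the conjugacy orbit `Ad(Sp₄(F))·n_d`. -/
theorem stmt5 {F : Type*} [Field F] [Valued F (WithZero (Multiplicative ℤ))]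
    [CompleteSpace F]
    (hq : Odd (Nat.card (IsLocalRing.ResidueField
      (Valued.v : Valuation F (WithZero (Multiplicative ℤ))).valuationSubring)))
    (hnontriv : ∃ π : F, Valued.v π ≠ 0 ∧ Valued.v π < 1)
    (d : F) (hd : d ≠ 0) (a b c : F)
    (hrep : ∃ X : Fin 4 → F, X 2 = 0 ∧ X 3 = 0 ∧
      sympForm X ((!![0, 0, 0, 0; 0, 0, 0, 0; b, a, 0, 0; c, b, 0, 0]).mulVec X) = d) :
    (!![0, 0, 0, 0; 0, 0, 0, 0; b, a, 0, 0; c, b, 0, 0] : Matrix (Fin 4) (Fin 4) F) ∈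
      closure {m : Matrix (Fin 4) (Fin 4) F |
        ∃ g : Matrix (Fin 4) (Fin 4) F, IsUnit g.det ∧ gᵀ * sympJ F * g = sympJ F ∧
          m = g * !![0, 0, 0, 0; 1, 0, 0, 0; 0, d, 0, 0; 0, 0, -1, 0] * g⁻¹} := by
  obtain ⟨π, hπ0, hπ1⟩ := hnontriv
  have hπne : π ≠ 0 := by rintro rfl; exact hπ0 (map_zero _)
  -- (2 : F) ≠ 0
  have h2 : (2:F) ≠ 0 := by
    intro h20
    set O := (Valued.v : Valuation F (WithZero (Multiplicative ℤ))).valuationSubring with hO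
    have h2O : (2 : O) = 0 := by
      have h' : ((2 : O) : F) = 2 := by norm_cast
      have h'' : ((2 : O) : F) = 0 := by rw [h', h20]
      exact_mod_cast h''
    have h2R : (2 : IsLocalRing.ResidueField O) = 0 := by
      have hmap : (IsLocalRing.residue O) 2 = (2 : IsLocalRing.ResidueField O) :=
        map_ofNat _ 2
      rw [← hmap, h2O, map_zero]
    have hcard : Nat.card (IsLocalRing.ResidueField O) ≠ 0 := by
      intro h0
      rw [h0] at hq
      simp at hq
    have hfin : Finite (IsLocalRing.ResidueField O) := (Nat.card_ne_zero.mp hcard).2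
    have : Fintype (IsLocalRing.ResidueField O) := Fintype.ofFinite _
    have hns : (2 : ℕ) • (1 : IsLocalRing.ResidueField O) = 0 := by
      rw [nsmul_eq_mul]
      simpa using h2R
    have hdvd : addOrderOf (1 : IsLocalRing.ResidueField O) ∣ 2 :=
      addOrderOf_dvd_iff_nsmul_eq_zero.mpr hns
    have hne1 : addOrderOf (1 : IsLocalRing.ResidueField O) ≠ 1 := by
      simp [AddMonoid.addOrderOf_eq_one_iff]
    have hord : addOrderOf (1 : IsLocalRing.ResidueField O) = 2 := by
      rcases (Nat.dvd_prime Nat.prime_two).mp hdvd with h | h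
      · exact absurd h hne1
      · exact h
    have hdvd2 : (2:ℕ) ∣ Nat.card (IsLocalRing.ResidueField O) := by
      rw [Nat.card_eq_fintype_card, ← hord]
      exact addOrderOf_dvd_card
    obtain ⟨k, hk⟩ := hdvd2
    rw [hk, Nat.odd_iff] at hq
    omega
  -- tendsto
  have htend : Filter.Tendsto (fun n : ℕ => π ^ (n+1)) Filter.atTop (nhds (0:F)) := by
    rw [(Valued.hasBasis_nhds_zero F (WithZero (Multiplicative ℤ))).tendsto_right_iff]
    intro γ _
    obtain ⟨mπ, hmπ⟩ := WithZero.ne_zero_iff_exists.mp hπ0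
    obtain ⟨g0, hg0⟩ := WithZero.ne_zero_iff_exists.mp
      ((map_ne_zero MonoidWithZeroHom.ValueGroup₀.embedding).mpr γ.ne_zero)
    have hm1 : Multiplicative.toAdd mπ ≤ -1 := by
      have hlt : (mπ : WithZero (Multiplicative ℤ)) < ((1 : Multiplicative ℤ) : WithZero (Multiplicative ℤ)) := by
        rw [hmπ]
        simpa using hπ1
      rw [WithZero.coe_lt_coe] at hlt
      have := Multiplicative.toAdd_lt.mpr hlt
      have h0 : Multiplicative.toAdd mπ < 0 := by simpa using this
      omega
    filter_upwards [Filter.eventually_ge_atTop (Multiplicative.toAdd g0).natAbs] with n hn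
    show Valued.v.restrict (π ^ (n+1)) < γ.1
    rw [Valuation.restrict_lt_iff_lt_embedding]
    rw [map_pow, ← hmπ, ← hg0, ← WithZero.coe_pow, WithZero.coe_lt_coe]
    refine Multiplicative.toAdd_lt.mp ?_
    rw [toAdd_pow, nsmul_eq_mul]
    have hmul : ((n+1 : ℕ) : ℤ) * Multiplicative.toAdd mπ ≤ ((n+1 : ℕ) : ℤ) * (-1) :=
      mul_le_mul_of_nonneg_left hm1 (by positivity)
    have hB : -((Multiplicative.toAdd g0).natAbs : ℤ) ≤ Multiplicative.toAdd g0 := by omega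
    have hn' : ((Multiplicative.toAdd g0).natAbs : ℤ) ≤ (n : ℤ) := by exact_mod_cast hn
    push_cast at hmul ⊢
    linarith
  -- quadratic representation
  obtain ⟨X, hX2, hX3, hXd⟩ := hrep
  have hQ : c * X 0 * X 0 + 2 * b * X 0 * X 1 + a * X 1 * X 1 = d := by
    simp [sympForm, Matrix.mulVec, dotProduct, Fin.sum_univ_four, hX2, hX3] at hXd
    linear_combination hXd
  -- assemble
  have hcont : Continuous (fun s : F =>
      (!![0, 0, 0, 0; 0, 0, 0, 0; b, a, 0, 0; c, b, 0, 0] : Matrix (Fin 4) (Fin 4) F)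
        + s • !![-(X 0*X 1/d), X 0*X 0/d, 0, 0; -(X 1*X 1/d), X 0*X 1/d, 0, 0;
                 0, 0, -(X 0*X 1/d), -(X 0*X 0/d); 0, 0, X 1*X 1/d, X 0*X 1/d]) := by
    apply continuous_matrix
    intro i j
    simp only [Matrix.add_apply, Matrix.smul_apply, smul_eq_mul]
    exact continuous_const.add (continuous_id.mul continuous_const)
  refine mem_closure_of_tendsto (f := fun n : ℕ =>
      (!![0, 0, 0, 0; 0, 0, 0, 0; b, a, 0, 0; c, b, 0, 0] : Matrix (Fin 4) (Fin 4) F)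
        + (π ^ (n+1)) • !![-(X 0*X 1/d), X 0*X 0/d, 0, 0; -(X 1*X 1/d), X 0*X 1/d, 0, 0;
                 0, 0, -(X 0*X 1/d), -(X 0*X 0/d); 0, 0, X 1*X 1/d, X 0*X 1/d])
      (b := Filter.atTop) ?_ ?_
  · have := (hcont.tendsto 0).comp htend
    simpa [Function.comp_def] using this
  · refine Filter.Eventually.of_forall fun n => ?_
    obtain ⟨g, hu, hsymp, heq⟩ :=
      stmt5_key a b c d (X 0) (X 1) (π^(n+1)) hd (pow_ne_zero _ hπne) h2 hQ
    exact ⟨g, hu, hsymp, heq⟩
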